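/- Every superpattern for all preferential arrangements of length k over [k] is a complete word (contains every permutation of [k] as a subsequence), and conversely every complete word on [k] contains an order-isomorphic copy of every preferential arrangement of length k as a subsequence. Hence n(k,k) = ρ(k) for all k ≥ 2. -/

import Mathlib

/-- `w` contains every listing of the finite set `S` as a sublist. -/
def CompleteFor (S : Finset ℕ) (w : List ℕ) : Prop :=
  ∀ l : List ℕ, l.Nodup → (∀ x ∈ l, x ∈ S) → l.length = S.card → l.Sublist w

lemma mem_of_completeFor {S : Finset ℕ} {w : List ℕ} (h : CompleteFor S w)
    {x : ℕ} (hx : x ∈ S) : x ∈ w := by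
  have hs := h (S.sort (·≤·)) (S.sort_nodup _) (fun y hy => (Finset.mem_sort _).1 hy)
    (Finset.length_sort _)
  exact hs.mem ((Finset.mem_sort _).2 hx)

lemma completeFor_step {S : Finset ℕ} {w1 w2 : List ℕ} {a : ℕ}
    (h : CompleteFor S (w1 ++ a :: w2)) (ha : a ∈ S) (hnw1 : a ∉ w1) :
    CompleteFor (S.erase a) w2 := by
  intro l hnd hmem hlen
  have hal : a ∉ l := fun hal => (Finset.ne_of_mem_erase (hmem a hal)) rfl
  have h1 : (a :: l).Sublist (w1 ++ a :: w2) := by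
    apply h (a :: l)
    · exact List.nodup_cons.2 ⟨hal, hnd⟩
    · intro x hx
      rcases List.mem_cons.1 hx with rfl | hx
      · exact ha
      · exact Finset.mem_of_mem_erase (hmem x hx)
    · have : S.card = (S.erase a).card + 1 := by
        rw [Finset.card_erase_of_mem ha]
        have : 0 < S.card := Finset.card_pos.2 ⟨a, ha⟩
        omega
      simp [hlen, this]
  rcases List.sublist_append_iff.1 h1 with ⟨l₁, l₂, heq, hs1, hs2⟩
  cases l₁ with
  | nil =>
    simp at heq
    subst heq
    exact List.cons_sublist_cons.1 hs2
  | cons x l₁ =>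
    exfalso
    have hx : x = a := by
      have := congrArg (fun t => t.head?) heq
      simp at this
      exact this.symm
    subst hx
    exact hnw1 (hs1.mem List.mem_cons_self)

/-- first-occurrence decomposition -/
lemma exists_first_occ {w : List ℕ} {a : ℕ} (h : a ∈ w) :
    ∃ w1 w2, w = w1 ++ a :: w2 ∧ a ∉ w1 := by
  induction w with
  | nil => simp at h
  | cons c w' ih =>
    by_cases hc : c = a
    · exact ⟨[], w', by simp [hc], by simp⟩
    · have haw' : a ∈ w' := by
        rcases List.mem_cons.1 h with h | h
        · exact absurd h.symm hc
        · exact h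
      rcases ih haw' with ⟨w1, w2, heq, hna⟩
      refine ⟨c :: w1, w2, by simp [heq], ?_⟩
      simp only [List.mem_cons, not_or]
      exact ⟨fun h => hc h.symm, hna⟩

/-- latest-first-occurrence decomposition: there is `a ∈ T` whose first occurrence
comes after the first occurrences of all other members of `T`. -/
lemma exists_latest_first_occ {w : List ℕ} (T : Finset ℕ) (hne : T.Nonempty)
    (hocc : ∀ x ∈ T, x ∈ w) :
    ∃ a ∈ T, ∃ w1 w2, w = w1 ++ a :: w2 ∧ a ∉ w1 ∧ ∀ x ∈ T, x ≠ a → x ∈ w1 := by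
  induction w generalizing T with
  | nil =>
    rcases hne with ⟨x, hx⟩
    exact absurd (hocc x hx) List.not_mem_nil
  | cons c w' ih =>
    by_cases hT : (T.erase c).Nonempty
    · have hocc' : ∀ x ∈ T.erase c, x ∈ w' := by
        intro x hx
        have hxc : x ≠ c := Finset.ne_of_mem_erase hx
        rcases List.mem_cons.1 (hocc x (Finset.mem_of_mem_erase hx)) with h | h
        · exact absurd h hxc
        · exact h
      rcases ih (T.erase c) hT hocc' with ⟨a, haT, w1, w2, heq, hnw1, hlate⟩
      refine ⟨a, Finset.mem_of_mem_erase haT, c :: w1, w2, by simp [heq], ?_, ?_⟩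
      · have : a ≠ c := Finset.ne_of_mem_erase haT
        simp [hnw1, this]
      · intro x hx hxa
        by_cases hxc : x = c
        · simp [hxc]
        · exact List.mem_cons_of_mem _ (hlate x (Finset.mem_erase.2 ⟨hxc, hx⟩) hxa)
    · rcases hne with ⟨a, ha⟩
      have hTa : ∀ x ∈ T, x = c := by
        intro x hx
        by_contra hxc
        exact hT ⟨x, Finset.mem_erase.2 ⟨hxc, hx⟩⟩
      have hac := hTa a ha
      subst hac
      exact ⟨a, ha, [], w', by simp, by simp, fun x hx hxa => absurd (hTa x hx) hxa⟩

/-- Key embedding lemma: if `w` is complete for `S` and each "rank" `t` is given a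
window `A t` (pairwise separated, increasing with `t`) holding enough
members of `S`, then the rank word `r` can be realized literally in `w` by choosing
a value `b t ∈ A t ∩ S` for each rank. -/
lemma key_embedding (r : List ℕ) :
    ∀ (S : Finset ℕ) (w : List ℕ) (A : ℕ → Finset ℕ),
    CompleteFor S w →
    (∀ t t', t < t' → ∀ x ∈ A t, ∀ y ∈ A t', x < y) →
    (∀ t, r.count t ≤ (A t ∩ S).card) →
    ∃ b : ℕ → ℕ, (∀ t ∈ r, b t ∈ A t ∩ S) ∧ (r.map b).Sublist w := by
  induction r with
  | nil => intro S w A _ _ _; exact ⟨fun _ => 0, by simp, by simp⟩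
  | cons t r' ih =>
    intro S w A hC hsep hcnt
    have hAdisj : ∀ u, u ≠ t → ∀ x, x ∈ A t → x ∉ A u := by
      intro u hu x hx hxu
      rcases Nat.lt_or_ge u t with h | h
      · exact lt_irrefl x (hsep u t h x hxu x hx)
      · have : t < u := lt_of_le_of_ne h (fun e => hu e.symm)
        exact lt_irrefl x (hsep t u this x hx x hxu)
    have hpos : 0 < (A t ∩ S).card := by
      have := hcnt t
      have h1 : 0 < (t :: r').count t := by simp [List.count_cons]
      omega
    by_cases ht : t ∈ r'
    · -- recurring case: remove the member of A t ∩ S with the latest first occurrence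
      have hne : (A t ∩ S).Nonempty := Finset.card_pos.1 hpos
      have hocc : ∀ x ∈ A t ∩ S, x ∈ w := fun x hx =>
        mem_of_completeFor hC (Finset.mem_of_mem_inter_right hx)
      rcases exists_latest_first_occ (A t ∩ S) hne hocc with
        ⟨a, haT, w1, w2, heqw, hnw1, hlate⟩
      have haA : a ∈ A t := Finset.mem_of_mem_inter_left haT
      have haS : a ∈ S := Finset.mem_of_mem_inter_right haT
      have hC2 : CompleteFor (S.erase a) w2 := by
        rw [heqw] at hC; exact completeFor_step hC haS hnw1
      have hcnt2 : ∀ u, r'.count u ≤ (A u ∩ S.erase a).card := by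
        intro u
        by_cases hu : u = t
        · subst hu
          have h1 : A u ∩ S.erase a = (A u ∩ S).erase a := by
            ext x; simp [Finset.mem_erase]; tauto
          rw [h1, Finset.card_erase_of_mem haT]
          have := hcnt u
          have h2 : (u :: r').count u = r'.count u + 1 := by simp [List.count_cons]
          omega
        · have h1 : A u ∩ S.erase a = A u ∩ S := by
            ext x
            simp only [Finset.mem_inter, Finset.mem_erase]
            constructor
            · tauto
            · rintro ⟨hxA, hxS⟩
              exact ⟨hxA, fun e => hAdisj u hu a haA (e ▸ hxA), hxS⟩
          rw [h1]
          have := hcnt u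
          have h2 : (t :: r').count u = r'.count u :=
            List.count_cons_of_ne (Ne.symm hu)
          omega
      rcases ih (S.erase a) w2 A hC2 hsep hcnt2 with ⟨b, hbmem, hbsub⟩
      refine ⟨b, ?_, ?_⟩
      · intro u hu
        have hu' : u ∈ r' := by
          rcases List.mem_cons.1 hu with rfl | hu'
          · exact ht
          · exact hu'
        have := hbmem u hu'
        rw [Finset.mem_inter] at this ⊢
        exact ⟨this.1, Finset.mem_of_mem_erase this.2⟩
      · have hbt : b t ∈ w1 := by
          have h1 := hbmem t ht
          rw [Finset.mem_inter, Finset.mem_erase] at h1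
          exact hlate (b t) (Finset.mem_inter.2 ⟨h1.1, h1.2.2⟩) h1.2.1
        rw [heqw]
        have h1 : (List.map b (t :: r')) = [b t] ++ List.map b r' := by simp
        rw [h1]
        exact List.Sublist.append (List.singleton_sublist.2 hbt) (hbsub.trans (List.sublist_cons_self a w2))
    · -- singleton case: commit any value v ∈ A t ∩ S at its first occurrence
      rcases Finset.card_pos.1 hpos with ⟨v, hvT⟩
      have hvA : v ∈ A t := Finset.mem_of_mem_inter_left hvT
      have hvS : v ∈ S := Finset.mem_of_mem_inter_right hvT
      rcases exists_first_occ (mem_of_completeFor hC hvS) with ⟨w1, w2, heqw, hnw1⟩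
      have hC2 : CompleteFor (S.erase v) w2 := by
        rw [heqw] at hC; exact completeFor_step hC hvS hnw1
      have hcnt2 : ∀ u, r'.count u ≤ (A u ∩ S.erase v).card := by
        intro u
        by_cases hu : u = t
        · subst hu; simp [List.count_eq_zero_of_not_mem ht]
        · have h1 : A u ∩ S.erase v = A u ∩ S := by
            ext x
            simp only [Finset.mem_inter, Finset.mem_erase]
            constructor
            · tauto
            · rintro ⟨hxA, hxS⟩
              exact ⟨hxA, fun e => hAdisj u hu v hvA (e ▸ hxA), hxS⟩
          rw [h1]
          have := hcnt u
          have h2 : (t :: r').count u = r'.count u :=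
            List.count_cons_of_ne (Ne.symm hu)
          omega
      rcases ih (S.erase v) w2 A hC2 hsep hcnt2 with ⟨b', hbmem, hbsub⟩
      refine ⟨fun u => if u = t then v else b' u, ?_, ?_⟩
      · intro u hu
        by_cases h : u = t
        · subst h; simpa using hvT
        · have hu' : u ∈ r' := by
            rcases List.mem_cons.1 hu with rfl | hu'
            · exact absurd rfl h
            · exact hu'
          have := hbmem u hu'
          rw [Finset.mem_inter] at this
          simp only [if_neg h, Finset.mem_inter]
          exact ⟨this.1, Finset.mem_of_mem_erase this.2⟩
      · rw [heqw]
        have hmapeq : List.map (fun u => if u = t then v else b' u) r' = List.map b' r' := by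
          apply List.map_congr_left
          intro u hu
          have : u ≠ t := fun e => ht (e ▸ hu)
          simp [this]
        have h1 : List.map (fun u => if u = t then v else b' u) (t :: r')
            = v :: List.map b' r' := by simp [hmapeq]
        rw [h1]
        exact ((hbsub.cons₂ v)).trans (List.sublist_append_right w1 (v :: w2))

/-- `u` and `v` are order isomorphic. -/
def SamePattern (u v : List ℕ) : Prop :=
  ∃ h : u.length = v.length,
    ∀ i j : Fin u.length,
      u.get i < u.get j ↔ v.get (Fin.cast h i) < v.get (Fin.cast h j)

/-- `w` contains an order-isomorphic copy of the pattern `p` as a subsequence. -/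
def ContainsPattern (w p : List ℕ) : Prop :=
  ∃ v : List ℕ, v.Sublist w ∧ SamePattern p v

/-- `w` is a word over {1,...,k} containing every preferential arrangement of
length k over [k] (every length-k string over [k], up to order isomorphism). -/
def IsPASuperpattern (k : ℕ) (w : List ℕ) : Prop :=
  (∀ x ∈ w, x ∈ Finset.Icc 1 k) ∧
  ∀ p : List ℕ, p.length = k → (∀ x ∈ p, x ∈ Finset.Icc 1 k) → ContainsPattern w p

/-- `w` is a complete word over {1,...,k}: it uses only letters from [k] and
contains every permutation of [k] (literally) as a subsequence. -/
def IsCompleteWord (k : ℕ) (w : List ℕ) : Prop :=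
  (∀ x ∈ w, x ∈ Finset.Icc 1 k) ∧
  ∀ σ : Equiv.Perm (Fin k), (List.ofFn fun i => (σ i : ℕ) + 1).Sublist w

lemma completeFor_of_isCompleteWord {k : ℕ} {w : List ℕ} (h : IsCompleteWord k w) :
    CompleteFor (Finset.Icc 1 k) w := by
  intro l hnd hmem hlen
  have hcard : (Finset.Icc 1 k).card = k := by rw [Nat.card_Icc]; omega
  have hlk : l.length = k := by rw [hlen, hcard]
  have hrange : ∀ i : Fin l.length, 1 ≤ l.get i ∧ l.get i ≤ k := by
    intro i
    have := hmem (l.get i) (l.get_mem i)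
    rwa [Finset.mem_Icc] at this
  have hb : ∀ i : Fin k, l.get (Fin.cast hlk.symm i) - 1 < k := by
    intro i
    have := hrange (Fin.cast hlk.symm i)
    omega
  set f : Fin k → Fin k := fun i => ⟨l.get (Fin.cast hlk.symm i) - 1, hb i⟩ with hf
  have hinj : Function.Injective f := by
    intro i j hij
    have h1 : l.get (Fin.cast hlk.symm i) - 1 = l.get (Fin.cast hlk.symm j) - 1 :=
      congrArg Fin.val hij
    have hi1 := hrange (Fin.cast hlk.symm i)
    have hj1 := hrange (Fin.cast hlk.symm j)
    have h2 : l.get (Fin.cast hlk.symm i) = l.get (Fin.cast hlk.symm j) := by omega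
    have h3 := (List.nodup_iff_injective_get.1 hnd) h2
    exact Fin.cast_injective _ h3
  set σ : Equiv.Perm (Fin k) := Equiv.ofBijective f (Finite.injective_iff_bijective.1 hinj)
    with hσ
  have heq : (List.ofFn fun i => (σ i : ℕ) + 1) = l := by
    apply List.ext_get (by simp [hlk])
    intro n h1 h2
    have h3 : (List.ofFn fun i => (σ i : ℕ) + 1).get ⟨n, h1⟩
        = (σ (⟨n, by simpa using h1⟩ : Fin k) : ℕ) + 1 := by
      simp [List.get_ofFn]
    rw [h3]
    have h4 : σ (⟨n, by simpa using h1⟩ : Fin k) = f ⟨n, by simpa using h1⟩ := rfl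
    rw [h4]
    have h5 := hrange ⟨n, h2⟩
    simp only [hf]
    have : (Fin.cast hlk.symm (⟨n, by simpa using h1⟩ : Fin k)) = (⟨n, h2⟩ : Fin l.length) :=
      Fin.ext rfl
    rw [this]
    omega
  rw [← heq]
  exact h.2 σ

/-- Rank formula for a nodup list whose entries fill `Icc 1 k`. -/
lemma get_eq_rank {k : ℕ} {l : List ℕ} (hnd : l.Nodup) (hlen : l.length = k)
    (hmem : ∀ x ∈ l, x ∈ Finset.Icc 1 k) (i : Fin l.length) :
    l.get i = (Finset.univ.filter (fun j : Fin l.length => l.get j < l.get i)).card + 1 := by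
  have ha : 1 ≤ l.get i ∧ l.get i ≤ k := by
    have := hmem (l.get i) (l.get_mem i); rwa [Finset.mem_Icc] at this
  have htf : l.toFinset = Finset.Icc 1 k := by
    apply Finset.eq_of_subset_of_card_le
    · intro x hx; exact hmem x (List.mem_toFinset.1 hx)
    · rw [List.toFinset_card_of_nodup hnd, hlen, Nat.card_Icc]
      omega
  have hcard : (Finset.univ.filter (fun j : Fin l.length => l.get j < l.get i)).card
      = ((Finset.Icc 1 k).filter (fun x => x < l.get i)).card := by
    apply Finset.card_bij (fun j _ => l.get j)
    · intro j hj
      simp only [Finset.mem_filter, Finset.mem_univ, true_and] at hj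
      simp only [Finset.mem_filter]
      exact ⟨hmem _ (l.get_mem j), hj⟩
    · intro j1 _ j2 _ he
      exact (List.nodup_iff_injective_get.1 hnd) he
    · intro x hx
      simp only [Finset.mem_filter] at hx
      have hx1 : x ∈ l.toFinset := by rw [htf]; exact hx.1
      rcases List.mem_iff_get.1 (List.mem_toFinset.1 hx1) with ⟨j, hj⟩
      refine ⟨j, ?_, hj⟩
      simp only [Finset.mem_filter, Finset.mem_univ, true_and, hj]
      exact hx.2
  have hIcc : (Finset.Icc 1 k).filter (fun x => x < l.get i) = Finset.Icc 1 (l.get i - 1) := by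
    ext x
    simp only [Finset.mem_filter, Finset.mem_Icc]
    omega
  rw [hcard, hIcc, Nat.card_Icc]
  omega

lemma filter_card_cast {m n : ℕ} (h : m = n) (Q : Fin n → Prop) [DecidablePred Q] :
    (Finset.univ.filter Q).card = (Finset.univ.filter (fun j : Fin m => Q (Fin.cast h j))).card := by
  subst h
  rfl

lemma countP_le_split (t : ℕ) (l : List ℕ) :
    l.countP (fun x => decide (x ≤ t)) = l.countP (fun x => decide (x < t)) + l.count t := by
  induction l with
  | nil => simp
  | cons a l ih =>
    simp only [List.countP_cons, List.count_cons, ih]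
    rcases lt_trichotomy a t with h | h | h
    · simp [h, h.le, h.ne', (Nat.ne_of_lt h)]; omega
    · simp [h]; omega
    · simp [Nat.not_le.2 h, (Nat.lt_asymm h), (Nat.ne_of_gt h), Nat.not_lt.2 h.le]

theorem superpattern_iff_complete (k : ℕ) (hk : 2 ≤ k) :
    (∀ w : List ℕ, IsPASuperpattern k w ↔ IsCompleteWord k w) ∧
    sInf {n : ℕ | ∃ w : List ℕ, IsPASuperpattern k w ∧ w.length = n} =
      sInf {n : ℕ | ∃ w : List ℕ, IsCompleteWord k w ∧ w.length = n} := by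
  have hiff : ∀ w : List ℕ, IsPASuperpattern k w ↔ IsCompleteWord k w := by
    intro w
    constructor
    · -- superpattern → complete
      intro hw
      refine ⟨hw.1, ?_⟩
      intro σ
      set p : List ℕ := List.ofFn (fun i => (σ i : ℕ) + 1) with hp
      have hplen : p.length = k := by simp [hp]
      have hpget : ∀ i : Fin p.length, p.get i = (σ (Fin.cast hplen i) : ℕ) + 1 := by
        intro i
        exact List.get_ofFn _ i
      have hpmem : ∀ x ∈ p, x ∈ Finset.Icc 1 k := by
        intro x hx
        rcases List.mem_iff_get.1 hx with ⟨i, rfl⟩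
        rw [hpget i, Finset.mem_Icc]
        have := (σ (Fin.cast hplen i)).isLt
        omega
      rcases hw.2 p hplen hpmem with ⟨v, hsub, hq, hpat⟩
      have hpnd : p.Nodup := by
        rw [List.nodup_iff_injective_get]
        intro i j hij
        rw [hpget i, hpget j] at hij
        have h1 : σ (Fin.cast hplen i) = σ (Fin.cast hplen j) := Fin.ext (by omega)
        have h2 := σ.injective h1
        exact Fin.cast_injective _ h2
      have hvlen : v.length = k := by omega
      have hvmem : ∀ x ∈ v, x ∈ Finset.Icc 1 k := fun x hx => hw.1 x (hsub.mem hx)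
      have hvnd : v.Nodup := by
        rw [List.nodup_iff_injective_get]
        intro i' j' he
        have hi : Fin.cast hq (Fin.cast hq.symm i') = i' := Fin.ext rfl
        have hj : Fin.cast hq (Fin.cast hq.symm j') = j' := Fin.ext rfl
        have h1 : p.get (Fin.cast hq.symm i') = p.get (Fin.cast hq.symm j') := by
          by_contra hne
          rcases Nat.lt_or_ge (p.get (Fin.cast hq.symm i')) (p.get (Fin.cast hq.symm j'))
            with h | h
          · have := (hpat _ _).1 h
            rw [hi, hj, he] at this
            exact lt_irrefl _ this
          · have h2 : p.get (Fin.cast hq.symm j') < p.get (Fin.cast hq.symm i') :=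
              lt_of_le_of_ne h (fun e => hne e.symm)
            have := (hpat _ _).1 h2
            rw [hi, hj, he] at this
            exact lt_irrefl _ this
        have h3 := (List.nodup_iff_injective_get.1 hpnd) h1
        exact Fin.cast_injective _ h3
      have hvp : ∀ i : Fin p.length, v.get (Fin.cast hq i) = p.get i := by
        intro i
        rw [get_eq_rank hpnd hplen hpmem i, get_eq_rank hvnd hvlen hvmem (Fin.cast hq i)]
        congr 1
        rw [filter_card_cast hq (fun j => v.get j < v.get (Fin.cast hq i))]
        apply congrArg Finset.card
        apply Finset.filter_congr
        intro j _
        exact (hpat j i).symm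
      have hveq : v = p := by
        apply List.ext_get (by omega)
        intro n h1 h2
        have := hvp ⟨n, h2⟩
        have hc : Fin.cast hq (⟨n, h2⟩ : Fin p.length) = (⟨n, h1⟩ : Fin v.length) :=
          Fin.ext rfl
        rw [hc] at this
        exact this
      exact hveq ▸ hsub
    · -- complete → superpattern
      intro hc
      refine ⟨hc.1, ?_⟩
      intro p hplen hpmem
      set A : ℕ → Finset ℕ := fun t =>
        Finset.Ioc (p.countP (fun x => decide (x < t))) (p.countP (fun x => decide (x ≤ t)))
        with hA
      have hsep : ∀ t t', t < t' → ∀ x ∈ A t, ∀ y ∈ A t', x < y := by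
        intro t t' htt x hx y hy
        simp only [hA, Finset.mem_Ioc] at hx hy
        have hmono : p.countP (fun x => decide (x ≤ t)) ≤ p.countP (fun x => decide (x < t')) :=
          List.countP_mono_left (by intro x _ hxt; simp at hxt ⊢; omega)
        omega
      have hcnt : ∀ t, p.count t ≤ (A t ∩ Finset.Icc 1 k).card := by
        intro t
        by_cases ht : t ∈ p
        · have hsub : A t ⊆ Finset.Icc 1 k := by
            intro x hx
            simp only [hA, Finset.mem_Ioc] at hx
            have h1 : p.countP (fun x => decide (x ≤ t)) ≤ p.length :=
              List.countP_le_length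
            rw [Finset.mem_Icc]
            omega
          rw [Finset.inter_eq_left.2 hsub]
          simp only [hA]
          rw [Nat.card_Ioc, countP_le_split]
          omega
        · rw [List.count_eq_zero_of_not_mem ht]
          exact Nat.zero_le _
      rcases key_embedding p (Finset.Icc 1 k) w A (completeFor_of_isCompleteWord hc)
        hsep hcnt with ⟨b, hbmem, hbsub⟩
      have hbmono : ∀ s t, s ∈ p → t ∈ p → s < t → b s < b t := by
        intro s t hs ht hst
        exact hsep s t hst _ (Finset.mem_of_mem_inter_left (hbmem s hs))
          _ (Finset.mem_of_mem_inter_left (hbmem t ht))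
      refine ⟨p.map b, hbsub, (by simp), ?_⟩
      intro i j
      have hg : ∀ i : Fin p.length,
          (p.map b).get (Fin.cast (by simp : p.length = (p.map b).length) i) = b (p.get i) := by
        intro i
        simp [List.get_eq_getElem, List.getElem_map]
      rw [hg i, hg j]
      constructor
      · intro hlt
        exact hbmono _ _ (p.get_mem i) (p.get_mem j) hlt
      · intro hlt
        by_contra hnot
        push_neg at hnot
        rcases lt_or_eq_of_le hnot with h | h
        · exact Nat.lt_asymm hlt (hbmono _ _ (p.get_mem j) (p.get_mem i) h)
        · rw [h] at hlt; exact lt_irrefl _ hlt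
  refine ⟨hiff, ?_⟩
  have hset : {n : ℕ | ∃ w : List ℕ, IsPASuperpattern k w ∧ w.length = n}
      = {n : ℕ | ∃ w : List ℕ, IsCompleteWord k w ∧ w.length = n} := by
    ext n
    constructor
    · rintro ⟨w, hw, hl⟩; exact ⟨w, (hiff w).1 hw, hl⟩
    · rintro ⟨w, hw, hl⟩; exact ⟨w, (hiff w).2 hw, hl⟩
  rw [hset]
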